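/- arXiv:2506.06194 — 7 statements merged into one kernel-verified Lean document; each statement's English description precedes it below -/
import Mathlib

section
/- Let D ≥ 1, let λ : ℝ → ℝ be continuous, let F : ℝ^D → ℝ^D be continuous, and let h : ℝ × ℝ^D → ℝ be continuously differentiable. Assume: (i) for all (t, θ) ∈ ℝ × ℝ^D, ∂_t h(t, θ) = λ(t) ⟨∇_θ h(t, θ), θ⟩ (h is conserved through the pure weight-decay flow θ' = −λ(t)θ, which in the paper follows from the existence, for each θ, of a dataset with vanishing loss gradient); and (ii) for all (t, θ) ∈ ℝ × ℝ^D, ∂_t h(t, θ) = ⟨∇_θ h(t, θ), F(θ) + λ(t) θ⟩ (h is conserved through the regularized flow θ' = −F(θ) − λ(t)θ). Define H : ℝ^D → ℝ by H(a) := h(0, a). Then: (a) h(t, θ) = H(θ · exp(∫₀ᵗ λ(s) ds)) for all (t, θ); and (b) ⟨∇H(θ), F(θ)⟩ = 0 for all θ ∈ ℝ^D, i.e., the time-independent function (t, θ) ↦ H(θ) is conserved through the unregularized flow θ' = −F(θ). -/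
/-- **Structure theorem** for conservation laws of gradient flows with weight decay.
If a `C¹` function `h (t, θ)` is conserved both through the pure weight-decay flow
`θ' = -λ(t) θ` (hypothesis `h1`) and through the regularized flow `θ' = -F(θ) - λ(t) θ`
(hypothesis `h2`), then (a) `h (t, θ) = H (exp (∫₀ᵗ λ) • θ)` where `H a := h (0, a)`,
and (b) the time-independent function `H` is conserved through the unregularized flow
`θ' = -F(θ)`, i.e. `⟨∇H(θ), F(θ)⟩ = 0`. -/
theorem structure_theorem_weight_decay
    (D : ℕ) (hD : 1 ≤ D) (lam : ℝ → ℝ) (hlam : Continuous lam)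
    (F : EuclideanSpace ℝ (Fin D) → EuclideanSpace ℝ (Fin D)) (hF : Continuous F)
    (h : ℝ × EuclideanSpace ℝ (Fin D) → ℝ) (hh : ContDiff ℝ 1 h)
    (h1 : ∀ (t : ℝ) (θ : EuclideanSpace ℝ (Fin D)),
      fderiv ℝ h (t, θ) (1, 0) = lam t * fderiv ℝ h (t, θ) (0, θ))
    (h2 : ∀ (t : ℝ) (θ : EuclideanSpace ℝ (Fin D)),
      fderiv ℝ h (t, θ) (1, 0) = fderiv ℝ h (t, θ) (0, F θ + lam t • θ)) :
    (∀ (t : ℝ) (θ : EuclideanSpace ℝ (Fin D)),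
      h (t, θ) = h (0, Real.exp (∫ s in (0:ℝ)..t, lam s) • θ)) ∧
    (∀ θ : EuclideanSpace ℝ (Fin D),
      fderiv ℝ (fun a => h (0, a)) θ (F θ) = 0) := by

  have hdiff : Differentiable ℝ h := hh.differentiable one_ne_zero
  -- key consequence of h1 & h2
  have key : ∀ (t : ℝ) (θ : EuclideanSpace ℝ (Fin D)), fderiv ℝ h (t, θ) (0, F θ) = 0 := by
    intro t θ
    have e1 := h1 t θ
    have e2 := h2 t θ
    have hsplit : ((0 : ℝ), F θ + lam t • θ) = ((0 : ℝ), F θ) + lam t • ((0 : ℝ), θ) := by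
      simp [Prod.ext_iff]
    rw [hsplit, map_add, map_smul, smul_eq_mul] at e2
    linarith [e1, e2]
  constructor
  · -- part (a)
    intro t θ
    have hA : ∀ u : ℝ, HasDerivAt (fun v => ∫ s in (0:ℝ)..v, lam s) (lam u) u := by
      intro u
      exact intervalIntegral.integral_hasDerivAt_right (hlam.intervalIntegrable _ _)
        (hlam.stronglyMeasurableAtFilter _ _) hlam.continuousAt
    set θ₀ : EuclideanSpace ℝ (Fin D) := Real.exp (∫ s in (0:ℝ)..t, lam s) • θ with hθ₀
    set g : ℝ → ℝ := fun u => h (u, Real.exp (-∫ s in (0:ℝ)..u, lam s) • θ₀) with hg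
    have hgd : ∀ u : ℝ, HasDerivAt g 0 u := by
      intro u
      set c : ℝ := Real.exp (-∫ s in (0:ℝ)..u, lam s) with hc
      have hcd : HasDerivAt (fun v => Real.exp (-∫ s in (0:ℝ)..v, lam s)) (c * (-lam u)) u :=
        ((hA u).neg).exp
      have hγ : HasDerivAt (fun v => Real.exp (-∫ s in (0:ℝ)..v, lam s) • θ₀)
          ((c * (-lam u)) • θ₀) u := hcd.smul_const θ₀
      have hcurve : HasDerivAt (fun v => (v, Real.exp (-∫ s in (0:ℝ)..v, lam s) • θ₀))
          ((1 : ℝ), (c * (-lam u)) • θ₀) u := (hasDerivAt_id u).prodMk hγ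
      have hcomp : HasDerivAt g (fderiv ℝ h (u, c • θ₀) ((1 : ℝ), (c * (-lam u)) • θ₀)) u :=
        (hdiff _).hasFDerivAt.comp_hasDerivAt u hcurve
      have hval : fderiv ℝ h (u, c • θ₀) ((1 : ℝ), (c * (-lam u)) • θ₀) = 0 := by
        have hsplit : ((1 : ℝ), (c * (-lam u)) • θ₀)
            = ((1 : ℝ), (0 : EuclideanSpace ℝ (Fin D))) + (-lam u) • ((0 : ℝ), c • θ₀) := by
          simp [Prod.ext_iff, smul_smul, mul_comm]
        rw [hsplit, map_add, map_smul, smul_eq_mul, h1 u (c • θ₀)]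
        ring
      rwa [hval] at hcomp
    have hconst : g t = g 0 :=
      is_const_of_deriv_eq_zero (fun u => (hgd u).differentiableAt)
        (fun u => (hgd u).deriv) t 0
    have hgt : g t = h (t, θ) := by
      simp only [hg, hθ₀, smul_smul, ← Real.exp_add]
      norm_num
    have hg0 : g 0 = h (0, θ₀) := by
      simp [hg]
    rw [← hgt, hconst, hg0]
  · -- part (b)
    intro θ
    have hc : HasFDerivAt (fun a : EuclideanSpace ℝ (Fin D) => ((0 : ℝ), a))
        (ContinuousLinearMap.inr ℝ ℝ (EuclideanSpace ℝ (Fin D))) θ := (ContinuousLinearMap.inr ℝ ℝ (EuclideanSpace ℝ (Fin D))).hasFDerivAt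
    have hcomp : HasFDerivAt (fun a : EuclideanSpace ℝ (Fin D) => h (0, a))
        ((fderiv ℝ h ((0 : ℝ), θ)).comp (ContinuousLinearMap.inr ℝ ℝ (EuclideanSpace ℝ (Fin D)))) θ :=
      (hdiff _).hasFDerivAt.comp θ hc
    rw [hcomp.fderiv]
    simpa using key 0 θ
end

section
/- Fix integers H ≥ 1, d ≥ 1, dim ≥ 1. Let G : (ℝ^{dim×dim} × ℝ^{dim×dim})^H → ℝ be differentiable and define L on parameters θ = (Q_h, K_h, V_h, O_h)_{h=1}^H ∈ ((ℝ^{d×dim})⁴)^H by L(θ) = G((Q_hᵀ K_h, V_hᵀ O_h)_{h=1}^H). (Any empirical loss of the multi-head attention network g(θ, X) = Σ_{h=1}^H softmax(X Q_hᵀ K_h Xᵀ) X V_hᵀ O_h is of this form, since the network depends on the parameters only through the products Q_hᵀK_h and V_hᵀO_h.) Then along any gradient-flow trajectory θ(t) of L, for each h ∈ {1, …, H} the matrices Q_h(t) Q_h(t)ᵀ − K_h(t) K_h(t)ᵀ and V_h(t) V_h(t)ᵀ − O_h(t) O_h(t)ᵀ are constant in t. -/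
open scoped Matrix

/-- The `Q` (resp. `K`, `V`, `O`, according to `c ∈ Fin 4`) matrix of the `h`-th head,
extracted from the multi-head attention parameter vector `θ`. -/
noncomputable def headMatrix (H d dim : ℕ)
    (θ : EuclideanSpace ℝ (Fin H × Fin 4 × Fin d × Fin dim)) (h : Fin H) (c : Fin 4) :
    Matrix (Fin d) (Fin dim) ℝ :=
  Matrix.of fun i j => θ (h, c, i, j)

/-- The reparameterization `θ = (Q_h, K_h, V_h, O_h)_h ↦ (Q_hᵀ K_h, V_hᵀ O_h)_h`,
through which any loss of the multi-head attention network factors. -/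
noncomputable def headReparam (H d dim : ℕ)
    (θ : EuclideanSpace ℝ (Fin H × Fin 4 × Fin d × Fin dim)) :
    EuclideanSpace ℝ (Fin H × Fin 2 × Fin dim × Fin dim) :=
  (EuclideanSpace.equiv (Fin H × Fin 2 × Fin dim × Fin dim) ℝ).symm fun p =>
    if p.2.1 = 0 then
      ((headMatrix H d dim θ p.1 0)ᵀ * headMatrix H d dim θ p.1 1) p.2.2.1 p.2.2.2
    else
      ((headMatrix H d dim θ p.1 2)ᵀ * headMatrix H d dim θ p.1 3) p.2.2.1 p.2.2.2

/-! ### Auxiliary lemmas -/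

lemma hasFDerivAt_coord {ι : Type*} [Fintype ι] (a : ι) (x : EuclideanSpace ℝ ι) :
    HasFDerivAt (fun y : EuclideanSpace ℝ ι => y a) (EuclideanSpace.proj (𝕜 := ℝ) a) x :=
  (EuclideanSpace.proj (𝕜 := ℝ) a).hasFDerivAt

lemma gradient_apply' {ι : Type*} [Fintype ι] [DecidableEq ι] (f : EuclideanSpace ℝ ι → ℝ)
    (x : EuclideanSpace ℝ ι) (idx : ι) :
    gradient f x idx = fderiv ℝ f x (EuclideanSpace.single idx 1) := by
  have h0 : (InnerProductSpace.toDual ℝ (EuclideanSpace ℝ ι)) (gradient f x) = fderiv ℝ f x := by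
    unfold gradient
    exact LinearIsometryEquiv.apply_symm_apply _ _
  rw [← h0, InnerProductSpace.toDual_apply_apply, EuclideanSpace.inner_single_right]
  simp

lemma piLp_sum_apply {ι κ : Type*} [Fintype ι] (s : Finset κ)
    (f : κ → EuclideanSpace ℝ ι) (i : ι) :
    (∑ m ∈ s, f m) i = ∑ m ∈ s, f m i :=
  map_sum (EuclideanSpace.projₗ (𝕜 := ℝ) i) f s

/-- The derivative of `headReparam` at `x`. -/
noncomputable def repDeriv (H d dim : ℕ)
    (x : EuclideanSpace ℝ (Fin H × Fin 4 × Fin d × Fin dim)) :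
    EuclideanSpace ℝ (Fin H × Fin 4 × Fin d × Fin dim) →L[ℝ]
      EuclideanSpace ℝ (Fin H × Fin 2 × Fin dim × Fin dim) :=
  (((EuclideanSpace.equiv (Fin H × Fin 2 × Fin dim × Fin dim) ℝ).symm :
        ((Fin H × Fin 2 × Fin dim × Fin dim) → ℝ) →L[ℝ] _)).comp
    (ContinuousLinearMap.pi fun p =>
      if p.2.1 = 0 then
        ∑ i : Fin d,
          (x (p.1, 0, i, p.2.2.1) • EuclideanSpace.proj (𝕜 := ℝ) (p.1, 1, i, p.2.2.2) +
            x (p.1, 1, i, p.2.2.2) • EuclideanSpace.proj (𝕜 := ℝ) (p.1, 0, i, p.2.2.1))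
      else
        ∑ i : Fin d,
          (x (p.1, 2, i, p.2.2.1) • EuclideanSpace.proj (𝕜 := ℝ) (p.1, 3, i, p.2.2.2) +
            x (p.1, 3, i, p.2.2.2) • EuclideanSpace.proj (𝕜 := ℝ) (p.1, 2, i, p.2.2.1)))

lemma headReparam_eq (H d dim : ℕ) :
    headReparam H d dim = fun x =>
      (EuclideanSpace.equiv (Fin H × Fin 2 × Fin dim × Fin dim) ℝ).symm fun p =>
        if p.2.1 = 0 then ∑ i : Fin d, x (p.1, 0, i, p.2.2.1) * x (p.1, 1, i, p.2.2.2)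
        else ∑ i : Fin d, x (p.1, 2, i, p.2.2.1) * x (p.1, 3, i, p.2.2.2) := by
  rfl

lemma hasFDerivAt_headReparam (H d dim : ℕ)
    (x : EuclideanSpace ℝ (Fin H × Fin 4 × Fin d × Fin dim)) :
    HasFDerivAt (headReparam H d dim) (repDeriv H d dim x) x := by
  rw [headReparam_eq]
  refine HasFDerivAt.comp x
    ((EuclideanSpace.equiv (Fin H × Fin 2 × Fin dim × Fin dim) ℝ).symm.hasFDerivAt) ?_
  refine hasFDerivAt_pi.2 fun p => ?_
  by_cases hp : p.2.1 = 0 <;> simp only [hp, if_true, if_false, reduceIte] <;>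
    exact HasFDerivAt.fun_sum fun i _ =>
      (hasFDerivAt_coord _ x).fun_mul (hasFDerivAt_coord _ x)

lemma repDeriv_single_Q (H d dim : ℕ)
    (x : EuclideanSpace ℝ (Fin H × Fin 4 × Fin d × Fin dim)) (h : Fin H) (i : Fin d)
    (j : Fin dim) :
    repDeriv H d dim x (EuclideanSpace.single (h, 0, i, j) 1)
      = ∑ m : Fin dim, x (h, 1, i, m) •
          EuclideanSpace.single ((h, 0, j, m) : Fin H × Fin 2 × Fin dim × Fin dim) (1:ℝ) := by
  apply PiLp.ext; intro p
  obtain ⟨h', e, p1, p2⟩ := p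
  rw [piLp_sum_apply]
  by_cases he : e = 0 <;> by_cases hh : h' = h <;> by_cases hp1 : p1 = j <;>
    simp [repDeriv, he, hh, hp1, ContinuousLinearMap.pi_apply, Prod.mk.injEq,
      EuclideanSpace.single_apply, mul_ite, Finset.sum_ite_eq, Finset.sum_ite_eq']

lemma repDeriv_single_K (H d dim : ℕ)
    (x : EuclideanSpace ℝ (Fin H × Fin 4 × Fin d × Fin dim)) (h : Fin H) (i : Fin d)
    (j : Fin dim) :
    repDeriv H d dim x (EuclideanSpace.single (h, 1, i, j) 1)
      = ∑ m : Fin dim, x (h, 0, i, m) •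
          EuclideanSpace.single ((h, 0, m, j) : Fin H × Fin 2 × Fin dim × Fin dim) (1:ℝ) := by
  apply PiLp.ext; intro p
  obtain ⟨h', e, p1, p2⟩ := p
  rw [piLp_sum_apply]
  by_cases he : e = 0 <;> by_cases hh : h' = h <;> by_cases hp2 : p2 = j <;>
    simp [repDeriv, he, hh, hp2, ContinuousLinearMap.pi_apply, Prod.mk.injEq,
      EuclideanSpace.single_apply, mul_ite, Finset.sum_ite_eq, Finset.sum_ite_eq']

lemma repDeriv_single_V (H d dim : ℕ)
    (x : EuclideanSpace ℝ (Fin H × Fin 4 × Fin d × Fin dim)) (h : Fin H) (i : Fin d)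
    (j : Fin dim) :
    repDeriv H d dim x (EuclideanSpace.single (h, 2, i, j) 1)
      = ∑ m : Fin dim, x (h, 3, i, m) •
          EuclideanSpace.single ((h, 1, j, m) : Fin H × Fin 2 × Fin dim × Fin dim) (1:ℝ) := by
  apply PiLp.ext; intro p
  obtain ⟨h', e, p1, p2⟩ := p
  rw [piLp_sum_apply]
  fin_cases e <;> by_cases hh : h' = h <;> by_cases hp1 : p1 = j <;>
    simp [repDeriv, hh, hp1, ContinuousLinearMap.pi_apply, Prod.mk.injEq,
      EuclideanSpace.single_apply, mul_ite, Finset.sum_ite_eq, Finset.sum_ite_eq']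

lemma repDeriv_single_O (H d dim : ℕ)
    (x : EuclideanSpace ℝ (Fin H × Fin 4 × Fin d × Fin dim)) (h : Fin H) (i : Fin d)
    (j : Fin dim) :
    repDeriv H d dim x (EuclideanSpace.single (h, 3, i, j) 1)
      = ∑ m : Fin dim, x (h, 2, i, m) •
          EuclideanSpace.single ((h, 1, m, j) : Fin H × Fin 2 × Fin dim × Fin dim) (1:ℝ) := by
  apply PiLp.ext; intro p
  obtain ⟨h', e, p1, p2⟩ := p
  rw [piLp_sum_apply]
  fin_cases e <;> by_cases hh : h' = h <;> by_cases hp2 : p2 = j <;>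
    simp [repDeriv, hh, hp2, ContinuousLinearMap.pi_apply, Prod.mk.injEq,
      EuclideanSpace.single_apply, mul_ite, Finset.sum_ite_eq, Finset.sum_ite_eq']

section gradientFormulas

variable {H d dim : ℕ}
  {G : EuclideanSpace ℝ (Fin H × Fin 2 × Fin dim × Fin dim) → ℝ}
  {L : EuclideanSpace ℝ (Fin H × Fin 4 × Fin d × Fin dim) → ℝ}

lemma hasFDerivAt_L (hG : Differentiable ℝ G)
    (hL : ∀ θ, L θ = G (headReparam H d dim θ))
    (x : EuclideanSpace ℝ (Fin H × Fin 4 × Fin d × Fin dim)) :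
    HasFDerivAt L ((fderiv ℝ G (headReparam H d dim x)).comp (repDeriv H d dim x)) x := by
  have hLG : L = fun z => G (headReparam H d dim z) := funext hL
  rw [hLG]
  exact ((hG _).hasFDerivAt).comp x (hasFDerivAt_headReparam H d dim x)

lemma gradient_L_Q (hG : Differentiable ℝ G)
    (hL : ∀ θ, L θ = G (headReparam H d dim θ))
    (x : EuclideanSpace ℝ (Fin H × Fin 4 × Fin d × Fin dim)) (h : Fin H) (i : Fin d)
    (j : Fin dim) :
    gradient L x (h, 0, i, j) = ∑ m : Fin dim, x (h, 1, i, m) *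
      fderiv ℝ G (headReparam H d dim x)
        (EuclideanSpace.single ((h, 0, j, m) : Fin H × Fin 2 × Fin dim × Fin dim) 1) := by
  rw [gradient_apply', (hasFDerivAt_L hG hL x).fderiv, ContinuousLinearMap.comp_apply,
    repDeriv_single_Q, map_sum]
  simp [smul_eq_mul]

lemma gradient_L_K (hG : Differentiable ℝ G)
    (hL : ∀ θ, L θ = G (headReparam H d dim θ))
    (x : EuclideanSpace ℝ (Fin H × Fin 4 × Fin d × Fin dim)) (h : Fin H) (i : Fin d)
    (j : Fin dim) :
    gradient L x (h, 1, i, j) = ∑ m : Fin dim, x (h, 0, i, m) *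
      fderiv ℝ G (headReparam H d dim x)
        (EuclideanSpace.single ((h, 0, m, j) : Fin H × Fin 2 × Fin dim × Fin dim) 1) := by
  rw [gradient_apply', (hasFDerivAt_L hG hL x).fderiv, ContinuousLinearMap.comp_apply,
    repDeriv_single_K, map_sum]
  simp [smul_eq_mul]

lemma gradient_L_V (hG : Differentiable ℝ G)
    (hL : ∀ θ, L θ = G (headReparam H d dim θ))
    (x : EuclideanSpace ℝ (Fin H × Fin 4 × Fin d × Fin dim)) (h : Fin H) (i : Fin d)
    (j : Fin dim) :
    gradient L x (h, 2, i, j) = ∑ m : Fin dim, x (h, 3, i, m) *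
      fderiv ℝ G (headReparam H d dim x)
        (EuclideanSpace.single ((h, 1, j, m) : Fin H × Fin 2 × Fin dim × Fin dim) 1) := by
  rw [gradient_apply', (hasFDerivAt_L hG hL x).fderiv, ContinuousLinearMap.comp_apply,
    repDeriv_single_V, map_sum]
  simp [smul_eq_mul]

lemma gradient_L_O (hG : Differentiable ℝ G)
    (hL : ∀ θ, L θ = G (headReparam H d dim θ))
    (x : EuclideanSpace ℝ (Fin H × Fin 4 × Fin d × Fin dim)) (h : Fin H) (i : Fin d)
    (j : Fin dim) :
    gradient L x (h, 3, i, j) = ∑ m : Fin dim, x (h, 2, i, m) *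
      fderiv ℝ G (headReparam H d dim x)
        (EuclideanSpace.single ((h, 1, m, j) : Fin H × Fin 2 × Fin dim × Fin dim) 1) := by
  rw [gradient_apply', (hasFDerivAt_L hG hL x).fderiv, ContinuousLinearMap.comp_apply,
    repDeriv_single_O, map_sum]
  simp [smul_eq_mul]

end gradientFormulas

lemma sum_swap_cancel {n : ℕ} (P Q : Fin n → Fin n → ℝ) :
    ∑ j : Fin n, ∑ m : Fin n, ((P m j - P j m) + (Q m j - Q j m)) = 0 := by
  have h1 : ∑ j : Fin n, ∑ m : Fin n, P m j = ∑ j : Fin n, ∑ m : Fin n, P j m :=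
    Finset.sum_comm
  have h2 : ∑ j : Fin n, ∑ m : Fin n, Q m j = ∑ j : Fin n, ∑ m : Fin n, Q j m :=
    Finset.sum_comm
  simp [Finset.sum_add_distrib, Finset.sum_sub_distrib, h1, h2]

lemma const_of_hasDerivAt_zero {I : Set ℝ} (hI : Convex ℝ I) {f : ℝ → ℝ}
    (hf : ∀ t ∈ I, HasDerivAt f 0 t) {s t : ℝ} (hs : s ∈ I) (ht : t ∈ I) : f s = f t := by
  have hsr : ContinuousLinearMap.toSpanSingleton ℝ (0 : ℝ) = 0 := by
    ext; simp
  have h0 : ∀ u ∈ I, HasFDerivWithinAt f (0 : ℝ →L[ℝ] ℝ) I u := fun u hu => by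
    have h1 := ((hf u hu).hasDerivWithinAt (s := I)).hasFDerivWithinAt
    rwa [hsr] at h1
  have h2 := hI.norm_image_sub_le_of_norm_hasFDerivWithin_le (C := 0) h0
    (fun u hu => by simp) ht hs
  have h3 : ‖f s - f t‖ ≤ 0 := by simpa using h2
  have h4 : f s - f t = 0 := norm_le_zero_iff.mp h3
  linarith

/-- For any loss `L(θ) = G((Q_hᵀK_h, V_hᵀO_h)_h)` that depends on the multi-head
attention parameters only through the products `Q_hᵀK_h` and `V_hᵀO_h` (with `G`
differentiable), the matrices `Q_h Q_hᵀ − K_h K_hᵀ` and `V_h V_hᵀ − O_h O_hᵀ` are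
constant along any gradient-flow trajectory `θ'(t) = −∇L(θ(t))` of `L`. -/
theorem multihead_attention_conservation
    (H d dim : ℕ) (hH : 1 ≤ H) (hd : 1 ≤ d) (hdim : 1 ≤ dim)
    (G : EuclideanSpace ℝ (Fin H × Fin 2 × Fin dim × Fin dim) → ℝ)
    (hG : Differentiable ℝ G)
    (L : EuclideanSpace ℝ (Fin H × Fin 4 × Fin d × Fin dim) → ℝ)
    (hL : ∀ θ, L θ = G (headReparam H d dim θ))
    (I : Set ℝ) (hI : Convex ℝ I)
    (θ : ℝ → EuclideanSpace ℝ (Fin H × Fin 4 × Fin d × Fin dim))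
    (hflow : ∀ t ∈ I, HasDerivAt θ (-(gradient L (θ t))) t) :
    ∀ h : Fin H, ∀ s ∈ I, ∀ t ∈ I,
      (headMatrix H d dim (θ s) h 0 * (headMatrix H d dim (θ s) h 0)ᵀ -
          headMatrix H d dim (θ s) h 1 * (headMatrix H d dim (θ s) h 1)ᵀ =
        headMatrix H d dim (θ t) h 0 * (headMatrix H d dim (θ t) h 0)ᵀ -
          headMatrix H d dim (θ t) h 1 * (headMatrix H d dim (θ t) h 1)ᵀ) ∧
      (headMatrix H d dim (θ s) h 2 * (headMatrix H d dim (θ s) h 2)ᵀ -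
          headMatrix H d dim (θ s) h 3 * (headMatrix H d dim (θ s) h 3)ᵀ =
        headMatrix H d dim (θ t) h 2 * (headMatrix H d dim (θ t) h 2)ᵀ -
          headMatrix H d dim (θ t) h 3 * (headMatrix H d dim (θ t) h 3)ᵀ) := by
  have hcoord : ∀ t ∈ I, ∀ idx, HasDerivAt (fun u => θ u idx)
      (-(gradient L (θ t) idx)) t := by
    intro t ht idx
    have h1 := (EuclideanSpace.proj (𝕜 := ℝ) idx).hasFDerivAt.comp_hasDerivAt t (hflow t ht)
    exact h1
  intro h s hs t ht
  constructor
  · -- Q, K branch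
    refine Matrix.ext fun a b => ?_
    simp only [Matrix.sub_apply, Matrix.mul_apply, Matrix.transpose_apply, headMatrix,
      Matrix.of_apply]
    rw [← Finset.sum_sub_distrib, ← Finset.sum_sub_distrib]
    refine const_of_hasDerivAt_zero hI (f := fun u => ∑ j : Fin dim,
      (θ u (h, 0, a, j) * θ u (h, 0, b, j) - θ u (h, 1, a, j) * θ u (h, 1, b, j)))
      (fun u hu => ?_) hs ht
    have H1 : HasDerivAt (fun u => ∑ j : Fin dim,
        (θ u (h, 0, a, j) * θ u (h, 0, b, j) - θ u (h, 1, a, j) * θ u (h, 1, b, j)))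
        (∑ j : Fin dim,
          ((-(gradient L (θ u) (h, 0, a, j)) * θ u (h, 0, b, j) +
              θ u (h, 0, a, j) * -(gradient L (θ u) (h, 0, b, j))) -
            (-(gradient L (θ u) (h, 1, a, j)) * θ u (h, 1, b, j) +
              θ u (h, 1, a, j) * -(gradient L (θ u) (h, 1, b, j))))) u :=
      HasDerivAt.fun_sum fun j _ =>
        (((hcoord u hu _).fun_mul (hcoord u hu _)).fun_sub ((hcoord u hu _).fun_mul (hcoord u hu _)))
    have h0 : (∑ j : Fin dim,
          ((-(gradient L (θ u) (h, 0, a, j)) * θ u (h, 0, b, j) +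
              θ u (h, 0, a, j) * -(gradient L (θ u) (h, 0, b, j))) -
            (-(gradient L (θ u) (h, 1, a, j)) * θ u (h, 1, b, j) +
              θ u (h, 1, a, j) * -(gradient L (θ u) (h, 1, b, j))))) = 0 := by
      set g : (Fin H × Fin 2 × Fin dim × Fin dim) → ℝ := fun p =>
        fderiv ℝ G (headReparam H d dim (θ u)) (EuclideanSpace.single p 1) with hg
      set P : Fin dim → Fin dim → ℝ := fun j m =>
        g (h, 0, j, m) * (θ u (h, 1, a, m) * θ u (h, 0, b, j)) with hP
      set Q : Fin dim → Fin dim → ℝ := fun j m =>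
        g (h, 0, j, m) * (θ u (h, 1, b, m) * θ u (h, 0, a, j)) with hQ
      have hsummand : ∀ j : Fin dim,
          ((-(gradient L (θ u) (h, 0, a, j)) * θ u (h, 0, b, j) +
              θ u (h, 0, a, j) * -(gradient L (θ u) (h, 0, b, j))) -
            (-(gradient L (θ u) (h, 1, a, j)) * θ u (h, 1, b, j) +
              θ u (h, 1, a, j) * -(gradient L (θ u) (h, 1, b, j))))
          = ∑ m : Fin dim, ((P m j - P j m) + (Q m j - Q j m)) := by
        intro j
        rw [gradient_L_Q hG hL, gradient_L_Q hG hL, gradient_L_K hG hL, gradient_L_K hG hL]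
        simp only [hP, hQ, hg, neg_mul, mul_neg, neg_neg, Finset.sum_mul, Finset.mul_sum,
          ← Finset.sum_neg_distrib, sub_eq_add_neg, neg_add, ← Finset.sum_add_distrib]
        exact Finset.sum_congr rfl fun m _ => by ring
      rw [Finset.sum_congr rfl fun j _ => hsummand j]
      exact sum_swap_cancel P Q
    exact h0 ▸ H1
  · -- V, O branch
    refine Matrix.ext fun a b => ?_
    simp only [Matrix.sub_apply, Matrix.mul_apply, Matrix.transpose_apply, headMatrix,
      Matrix.of_apply]
    rw [← Finset.sum_sub_distrib, ← Finset.sum_sub_distrib]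
    refine const_of_hasDerivAt_zero hI (f := fun u => ∑ j : Fin dim,
      (θ u (h, 2, a, j) * θ u (h, 2, b, j) - θ u (h, 3, a, j) * θ u (h, 3, b, j)))
      (fun u hu => ?_) hs ht
    have H1 : HasDerivAt (fun u => ∑ j : Fin dim,
        (θ u (h, 2, a, j) * θ u (h, 2, b, j) - θ u (h, 3, a, j) * θ u (h, 3, b, j)))
        (∑ j : Fin dim,
          ((-(gradient L (θ u) (h, 2, a, j)) * θ u (h, 2, b, j) +
              θ u (h, 2, a, j) * -(gradient L (θ u) (h, 2, b, j))) -
            (-(gradient L (θ u) (h, 3, a, j)) * θ u (h, 3, b, j) +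
              θ u (h, 3, a, j) * -(gradient L (θ u) (h, 3, b, j))))) u :=
      HasDerivAt.fun_sum fun j _ =>
        (((hcoord u hu _).fun_mul (hcoord u hu _)).fun_sub ((hcoord u hu _).fun_mul (hcoord u hu _)))
    have h0 : (∑ j : Fin dim,
          ((-(gradient L (θ u) (h, 2, a, j)) * θ u (h, 2, b, j) +
              θ u (h, 2, a, j) * -(gradient L (θ u) (h, 2, b, j))) -
            (-(gradient L (θ u) (h, 3, a, j)) * θ u (h, 3, b, j) +
              θ u (h, 3, a, j) * -(gradient L (θ u) (h, 3, b, j))))) = 0 := by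
      set g : (Fin H × Fin 2 × Fin dim × Fin dim) → ℝ := fun p =>
        fderiv ℝ G (headReparam H d dim (θ u)) (EuclideanSpace.single p 1) with hg
      set P : Fin dim → Fin dim → ℝ := fun j m =>
        g (h, 1, j, m) * (θ u (h, 3, a, m) * θ u (h, 2, b, j)) with hP
      set Q : Fin dim → Fin dim → ℝ := fun j m =>
        g (h, 1, j, m) * (θ u (h, 3, b, m) * θ u (h, 2, a, j)) with hQ
      have hsummand : ∀ j : Fin dim,
          ((-(gradient L (θ u) (h, 2, a, j)) * θ u (h, 2, b, j) +
              θ u (h, 2, a, j) * -(gradient L (θ u) (h, 2, b, j))) -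
            (-(gradient L (θ u) (h, 3, a, j)) * θ u (h, 3, b, j) +
              θ u (h, 3, a, j) * -(gradient L (θ u) (h, 3, b, j))))
          = ∑ m : Fin dim, ((P m j - P j m) + (Q m j - Q j m)) := by
        intro j
        rw [gradient_L_V hG hL, gradient_L_V hG hL, gradient_L_O hG hL, gradient_L_O hG hL]
        simp only [hP, hQ, hg, neg_mul, mul_neg, neg_neg, Finset.sum_mul, Finset.mul_sum,
          ← Finset.sum_neg_distrib, sub_eq_add_neg, neg_add, ← Finset.sum_add_distrib]
        exact Finset.sum_congr rfl fun m _ => by ring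
      rw [Finset.sum_congr rfl fun j _ => hsummand j]
      exact sum_swap_cancel P Q
    exact h0 ▸ H1
end

section
/- Let n ≥ 1, m ≥ 1, N ≥ 1, fix data points x₁, …, x_N ∈ ℝ^m and labels y₁, …, y_N in a set Y, and let ℓ : ℝⁿ × Y → ℝ be such that z ↦ ℓ(z, y) is differentiable for each y ∈ Y. Define L : ℝ^{n×m} → ℝ by L(θ) = (1/N) Σ_{i=1}^N ℓ(softmax(θ xᵢ), yᵢ). Then along any gradient-flow trajectory θ(t) of L, each column sum h_j(θ) = Σ_{i=1}^n θ_{i,j}, for j = 1, …, m, is constant in t. -/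
/-- Along any gradient-flow trajectory of the empirical loss
`L(θ) = (1/N) ∑ᵢ ℓ(softmax(θ xᵢ), yᵢ)` of a softmax classification layer, each column
sum `h_j(θ) = ∑ᵢ θ_{i,j}` of the parameter matrix is constant in time. -/
theorem softmax_layer_column_sums_conserved
    (n m N : ℕ) (hn : 1 ≤ n) (hm : 1 ≤ m) (hN : 1 ≤ N)
    (Y : Type*) (x : Fin N → Fin m → ℝ) (y : Fin N → Y)
    (ℓ : (Fin n → ℝ) → Y → ℝ) (hℓ : ∀ yy : Y, Differentiable ℝ (fun z => ℓ z yy))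
    (L : EuclideanSpace ℝ (Fin n × Fin m) → ℝ)
    (hL : ∀ θ, L θ = (1 / (N : ℝ)) * ∑ i : Fin N,
      ℓ (fun a => Real.exp (∑ b, θ (a, b) * x i b) /
          ∑ c, Real.exp (∑ b, θ (c, b) * x i b)) (y i))
    (I : Set ℝ) (hI : Convex ℝ I)
    (θ : ℝ → EuclideanSpace ℝ (Fin n × Fin m))
    (hflow : ∀ t ∈ I, HasDerivAt θ (-(gradient L (θ t))) t) :
    ∀ j : Fin m, ∀ s ∈ I, ∀ t ∈ I, ∑ i, θ s (i, j) = ∑ i, θ t (i, j) := by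
  intro j s hs t ht
  haveI : Nonempty (Fin n) := Fin.pos_iff_nonempty.mp hn
  -- the invariance direction
  set v : EuclideanSpace ℝ (Fin n × Fin m) :=
    WithLp.toLp 2 (fun p => if p.2 = j then (1:ℝ) else 0 : Fin n × Fin m → ℝ) with hv
  have hvq : ∀ q : Fin n × Fin m, v q = if q.2 = j then (1:ℝ) else 0 := fun _ => rfl
  -- denominators are nonzero
  have hden : ∀ (i : Fin N) (p : EuclideanSpace ℝ (Fin n × Fin m)), (∑ c, Real.exp (∑ b, p (c, b) * x i b)) ≠ 0 := by
    intro i p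
    exact ne_of_gt (Finset.sum_pos (fun c _ => Real.exp_pos _) Finset.univ_nonempty)
  -- L is differentiable
  have hLfun : L = fun p : EuclideanSpace ℝ (Fin n × Fin m) => (1 / (N : ℝ)) * ∑ i : Fin N,
      ℓ (fun a => Real.exp (∑ b, p (a, b) * x i b) /
          ∑ c, Real.exp (∑ b, p (c, b) * x i b)) (y i) := funext hL
  have hlin : ∀ (i : Fin N) (a : Fin n),
      Differentiable ℝ (fun p : EuclideanSpace ℝ (Fin n × Fin m) => ∑ b, p (a, b) * x i b) := by
    intro i a
    exact Differentiable.fun_sum fun b _ =>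
      by have h := ((EuclideanSpace.proj (𝕜 := ℝ) ((a, b) : Fin n × Fin m)).differentiable).mul_const (x i b); exact h
  have hS : ∀ i : Fin N, Differentiable ℝ (fun p : EuclideanSpace ℝ (Fin n × Fin m) =>
      (fun a => Real.exp (∑ b, p (a, b) * x i b) /
          ∑ c, Real.exp (∑ b, p (c, b) * x i b) : Fin n → ℝ)) := by
    intro i
    rw [differentiable_pi]
    intro a
    have hnum : Differentiable ℝ (fun p : EuclideanSpace ℝ (Fin n × Fin m) =>
        Real.exp (∑ b, p (a, b) * x i b)) := Real.differentiable_exp.comp (hlin i a)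
    have hdend : Differentiable ℝ (fun p : EuclideanSpace ℝ (Fin n × Fin m) =>
        ∑ c, Real.exp (∑ b, p (c, b) * x i b)) :=
      Differentiable.fun_sum fun c _ => Real.differentiable_exp.comp (hlin i c)
    have heq : (fun p : EuclideanSpace ℝ (Fin n × Fin m) =>
        Real.exp (∑ b, p (a, b) * x i b) / ∑ c, Real.exp (∑ b, p (c, b) * x i b))
        = fun p => Real.exp (∑ b, p (a, b) * x i b) *
            (∑ c, Real.exp (∑ b, p (c, b) * x i b))⁻¹ :=
      funext fun p => div_eq_mul_inv _ _
    rw [heq]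
    exact hnum.mul (hdend.inv (hden i))
  have hLdiff : Differentiable ℝ L := by
    rw [hLfun]
    exact (Differentiable.fun_sum fun i _ => (hℓ (y i)).comp (hS i)).const_mul _
  -- invariance of L along v
  have key : ∀ (p : EuclideanSpace ℝ (Fin n × Fin m)) (c : ℝ), L (p + c • v) = L p := by
    intro p c
    rw [hL, hL]
    congr 1
    refine Finset.sum_congr rfl fun i _ => ?_
    have hz : ∀ a : Fin n, (∑ b, (p + c • v) (a, b) * x i b)
        = (∑ b, p (a, b) * x i b) + c * x i j := by
      intro a
      have : ∀ b : Fin m, (p + c • v) (a, b) * x i b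
          = p (a, b) * x i b + (if b = j then c * x i b else 0) := by
        intro b
        show (p (a, b) + c * v (a, b)) * x i b = _
        rw [hvq]
        by_cases hb : b = j <;> simp [hb] <;> ring
      rw [Finset.sum_congr rfl fun b _ => this b, Finset.sum_add_distrib,
        Finset.sum_ite_eq' Finset.univ j (fun b => c * x i b)]
      simp
    congr 1
    funext a
    simp only [hz]
    have hd2 : (∑ c' : Fin n, Real.exp ((∑ b, p (c', b) * x i b) + c * x i j))
        = (∑ c' : Fin n, Real.exp (∑ b, p (c', b) * x i b)) * Real.exp (c * x i j) := by
      rw [Finset.sum_mul]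
      exact Finset.sum_congr rfl fun c' _ => Real.exp_add _ _
    rw [hd2, Real.exp_add, mul_div_mul_right _ _ (Real.exp_ne_zero _)]
  -- fderiv in direction v vanishes
  have hfderiv : ∀ p : EuclideanSpace ℝ (Fin n × Fin m), fderiv ℝ L p v = 0 := by
    intro p
    have hc : HasDerivAt (fun s : ℝ => p + s • v) v 0 := by
      simpa using ((hasDerivAt_id (0:ℝ)).smul_const v).const_add p
    have h1 : HasDerivAt (fun s : ℝ => L (p + s • v)) (fderiv ℝ L p v) 0 := by
      have := (hLdiff (p + (0:ℝ) • v)).hasFDerivAt.comp_hasDerivAt 0 hc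
      simp only [zero_smul, add_zero] at this; exact this
    have h2 : HasDerivAt (fun s : ℝ => L (p + s • v)) 0 0 := by
      have : (fun s : ℝ => L (p + s • v)) = fun _ => L p := funext fun c => key p c
      rw [this]; exact hasDerivAt_const 0 (L p)
    exact h1.unique h2
  -- gradient ⟂ v
  have hgradv : ∀ p : EuclideanSpace ℝ (Fin n × Fin m), (inner ℝ (gradient L p) v : ℝ) = 0 := by
    intro p
    have : ((InnerProductSpace.toDual ℝ (EuclideanSpace ℝ (Fin n × Fin m))) (gradient L p)) v = fderiv ℝ L p v := by
      rw [gradient, LinearIsometryEquiv.apply_symm_apply]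
    rw [InnerProductSpace.toDual_apply_apply] at this
    rw [this, hfderiv]
  -- the conserved quantity
  have hconst : ∀ u ∈ I, HasDerivWithinAt (fun t => (inner ℝ v (θ t) : ℝ)) 0 I u := by
    intro u hu
    have h1 : HasDerivAt (fun t => (innerSL ℝ v) (θ t))
        ((innerSL ℝ v) (-(gradient L (θ u)))) u :=
      (innerSL ℝ v).hasFDerivAt.comp_hasDerivAt u (hflow u hu)
    have h2 : (innerSL ℝ v) (-(gradient L (θ u))) = 0 := by
      simp only [innerSL_apply_apply, inner_neg_right]
      rw [real_inner_comm, hgradv]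
      simp
    rw [h2] at h1
    exact h1.hasDerivWithinAt
  have hdiff0 : (inner ℝ v (θ t) : ℝ) = (inner ℝ v (θ s) : ℝ) := by
    have := Convex.norm_image_sub_le_of_norm_hasDerivWithin_le (C := 0) hconst
      (fun u _ => by simp) hI hs ht
    have h0 : ‖(inner ℝ v (θ t) : ℝ) - (inner ℝ v (θ s) : ℝ)‖ ≤ 0 := by simpa using this
    have := norm_le_zero_iff.mp h0
    linarith [sub_eq_zero.mp this]
  -- identify inner with column sums
  have hform : ∀ u : ℝ, (inner ℝ v (θ u) : ℝ) = ∑ i, θ u (i, j) := by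
    intro u
    rw [PiLp.inner_apply]
    simp only [RCLike.inner_apply, conj_trivial]
    rw [Fintype.sum_prod_type]
    refine Finset.sum_congr rfl fun a _ => ?_
    have : ∀ b : Fin m, v (a, b) * θ u (a, b) = if b = j then θ u (a, b) else 0 := by
      intro b; rw [hvq]; by_cases hb : b = j <;> simp [hb]
    rw [Finset.sum_congr rfl fun b _ => (mul_comm _ _).trans (this b), Finset.sum_ite_eq' Finset.univ j]
    simp
  rw [← hform s, ← hform t, hdiff0]
end

section
/- Let n ≥ 2 and m ≥ 1, and fix y ∈ ℝ^m. Then span{Aᵀ J(Ay)ᵀ w : A ∈ ℝ^{n×m}, w ∈ ℝⁿ} = ℝ^m, where J(z) ∈ ℝ^{n×n} denotes the Jacobian of softmax : ℝⁿ → ℝⁿ at z. In fact, for every u ∈ ℝ^m there exist A ∈ ℝ^{n×m} and w ∈ ℝⁿ with Aᵀ J(Ay)ᵀ w = u. -/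
open scoped Matrix

/-- `softmax(z)ᵢ = exp(zᵢ) / ∑ⱼ exp(zⱼ)`. -/
noncomputable def softmaxFun {ι : Type*} [Fintype ι] (z : ι → ℝ) : ι → ℝ :=
  fun i => Real.exp (z i) / ∑ j, Real.exp (z j)

/-- The Jacobian `J(z) = diag(softmax(z)) − softmax(z) softmax(z)ᵀ` of softmax at `z`. -/
noncomputable def softmaxJac (n : ℕ) (z : Fin n → ℝ) : Matrix (Fin n) (Fin n) ℝ :=
  Matrix.diagonal (softmaxFun z) - Matrix.of fun i j => softmaxFun z i * softmaxFun z j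

lemma softmax_aux (n m : ℕ) (hn : 2 ≤ n) (y : Fin m → ℝ) (u : Fin m → ℝ) :
    ∃ (A : Matrix (Fin n) (Fin m) ℝ) (w : Fin n → ℝ),
      Aᵀ.mulVec ((softmaxJac n (A.mulVec y))ᵀ.mulVec w) = u := by
  classical
  set i0 : Fin n := ⟨0, by omega⟩ with hi0
  set i1 : Fin n := ⟨1, by omega⟩ with hi1
  have hne : i1 ≠ i0 := by simp [hi0, hi1, Fin.ext_iff]
  set A : Matrix (Fin n) (Fin m) ℝ := Matrix.of (fun i j => if i = i0 then u j else 0) with hA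
  set z := A.mulVec y with hz
  set s := softmaxFun z with hs
  have hSpos : 0 < ∑ j, Real.exp (z j) :=
    Finset.sum_pos (fun j _ => Real.exp_pos _) ⟨i0, Finset.mem_univ _⟩
  have hs0pos : 0 < s i0 := div_pos (Real.exp_pos _) hSpos
  have hs0lt : s i0 < 1 := by
    rw [hs, softmaxFun, div_lt_one hSpos]
    exact Finset.single_lt_sum hne (Finset.mem_univ _) (Finset.mem_univ _) (Real.exp_pos _)
      (fun k _ _ => (Real.exp_pos _).le)
  have hprod : s i0 * (1 - s i0) ≠ 0 :=
    mul_ne_zero hs0pos.ne' (by linarith)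
  set t : ℝ := (s i0 * (1 - s i0))⁻¹ with ht
  refine ⟨A, fun i => if i = i0 then t else 0, ?_⟩
  funext j
  simp only [Matrix.mulVec, dotProduct, Matrix.transpose_apply, softmaxJac,
    Matrix.sub_apply, Matrix.diagonal_apply, Matrix.of_apply, sub_mul, ite_mul, zero_mul,
    mul_ite, mul_zero]
  simp only [Finset.sum_ite_eq', Finset.mem_univ, if_true]
  rw [Finset.sum_eq_single i0]
  · simp only [hA, Matrix.of_apply, if_pos rfl, ← hs, ← hz, if_pos rfl]
    field_simp [ht]
    simp only [if_true]
    change u j * (s i0 * t - s i0 ^ 2 * t) = u j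
    have key : s i0 * t - s i0 ^ 2 * t = s i0 * (1 - s i0) * t := by ring
    rw [key, ht, mul_inv_cancel₀ hprod, mul_one]
  · intro b _ hb
    simp [hA, hb]
  · simp

/-- Surjectivity of the adjoint through a final softmax layer: for `n ≥ 2` and any fixed
`y ∈ ℝ^m`, the vectors `Aᵀ J(Ay)ᵀ w` (over all `A ∈ ℝ^{n×m}`, `w ∈ ℝⁿ`) span `ℝ^m`;
in fact every `u ∈ ℝ^m` is exactly of this form. -/
theorem softmax_adjoint_surjective
    (n m : ℕ) (hn : 2 ≤ n) (hm : 1 ≤ m) (y : Fin m → ℝ) :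
    Submodule.span ℝ {u : Fin m → ℝ |
      ∃ (A : Matrix (Fin n) (Fin m) ℝ) (w : Fin n → ℝ),
        u = Aᵀ.mulVec ((softmaxJac n (A.mulVec y))ᵀ.mulVec w)} = ⊤ ∧
    ∀ u : Fin m → ℝ, ∃ (A : Matrix (Fin n) (Fin m) ℝ) (w : Fin n → ℝ),
      Aᵀ.mulVec ((softmaxJac n (A.mulVec y))ᵀ.mulVec w) = u := by
  refine ⟨?_, softmax_aux n m hn y⟩
  rw [eq_top_iff]
  intro u _
  apply Submodule.subset_span
  obtain ⟨A, w, h⟩ := softmax_aux n m hn y u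
  exact ⟨A, w, h.symm⟩
end

section
/- Let Ω ⊆ ℝ^D be open, let L : Ω → ℝ be differentiable, and let T : ℝ × Ω → Ω be a one-parameter transformation such that T(0, θ) = θ for all θ, ε ↦ T(ε, θ) is differentiable at ε = 0 for each θ, and L(T(ε, θ)) = L(θ) for all ε ∈ ℝ and θ ∈ Ω (T leaves L invariant). Let h : Ω → ℝ be differentiable with ∇h(θ) = ∂_ε T(ε, θ)|_{ε=0} for all θ ∈ Ω. Then along any gradient-flow trajectory θ(t) of L, h(θ(t)) is constant. -/
/-- A conservation law obtained via an invariance: if `T` is a one-parameter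
transformation of the open set `Ω` with `T(0, θ) = θ` that leaves `L` invariant, and if
`h` is differentiable with `∇h(θ)` equal to the infinitesimal generator
`∂_ε T(ε, θ)|_{ε=0}` of `T`, then `h` is constant along any gradient-flow trajectory
`θ'(t) = −∇L(θ(t))` of `L` staying in `Ω`. -/
theorem invariance_gives_conservation_law
    (D : ℕ) (Ω : Set (EuclideanSpace ℝ (Fin D))) (hΩ : IsOpen Ω)
    (L : EuclideanSpace ℝ (Fin D) → ℝ) (hL : DifferentiableOn ℝ L Ω)
    (T : ℝ → EuclideanSpace ℝ (Fin D) → EuclideanSpace ℝ (Fin D))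
    (hTmaps : ∀ (ε : ℝ), ∀ θ ∈ Ω, T ε θ ∈ Ω)
    (hT0 : ∀ θ ∈ Ω, T 0 θ = θ)
    (hTinv : ∀ (ε : ℝ), ∀ θ ∈ Ω, L (T ε θ) = L θ)
    (h : EuclideanSpace ℝ (Fin D) → ℝ) (hdiff : DifferentiableOn ℝ h Ω)
    (hgen : ∀ θ ∈ Ω, HasDerivAt (fun ε => T ε θ) (gradient h θ) 0)
    (I : Set ℝ) (hI : Convex ℝ I)
    (θc : ℝ → EuclideanSpace ℝ (Fin D))
    (hmem : ∀ t ∈ I, θc t ∈ Ω)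
    (hflow : ∀ t ∈ I, HasDerivAt θc (-(gradient L (θc t))) t) :
    ∀ s ∈ I, ∀ t ∈ I, h (θc s) = h (θc t) := by
  -- gradients exist pointwise on Ω
  have hLgrad : ∀ θ ∈ Ω, HasGradientAt L (gradient L θ) θ := fun θ hθ =>
    (hL.differentiableAt (hΩ.mem_nhds hθ)).hasGradientAt
  have hhgrad : ∀ θ ∈ Ω, HasGradientAt h (gradient h θ) θ := fun θ hθ =>
    (hdiff.differentiableAt (hΩ.mem_nhds hθ)).hasGradientAt
  -- the key orthogonality: ⟪∇L θ, ∇h θ⟫ = 0 on Ω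
  have key : ∀ θ ∈ Ω, (inner ℝ (gradient L θ) (gradient h θ) : ℝ) = 0 := by
    intro θ hθ
    have hc : (fun ε : ℝ => L (T ε θ)) = fun _ => L θ := funext fun ε => hTinv ε θ hθ
    have hzero : HasDerivAt (fun ε : ℝ => L (T ε θ)) 0 0 := by
      rw [hc]; exact hasDerivAt_const 0 (L θ)
    have hfd : HasFDerivAt L (InnerProductSpace.toDual ℝ _ (gradient L θ)) (T 0 θ) := by
      rw [hT0 θ hθ]; exact (hLgrad θ hθ)
    have hcomp : HasDerivAt (fun ε : ℝ => L (T ε θ))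
        (InnerProductSpace.toDual ℝ _ (gradient L θ) (gradient h θ)) 0 :=
      hfd.comp_hasDerivAt 0 (hgen θ hθ)
    have := hzero.unique hcomp
    rw [InnerProductSpace.toDual_apply_apply] at this; exact this.symm
  -- h ∘ θc has zero derivative on I
  have hderiv : ∀ t ∈ I, HasDerivWithinAt (fun t => h (θc t)) 0 I t := by
    intro t ht
    have hfd : HasFDerivAt h (InnerProductSpace.toDual ℝ _ (gradient h (θc t))) (θc t) :=
      hhgrad _ (hmem t ht)
    have hcomp : HasDerivAt (fun t => h (θc t))
        (InnerProductSpace.toDual ℝ _ (gradient h (θc t)) (-(gradient L (θc t)))) t :=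
      hfd.comp_hasDerivAt t (hflow t ht)
    have h0 : (InnerProductSpace.toDual ℝ _ (gradient h (θc t)))
        (-(gradient L (θc t))) = 0 := by
      rw [map_neg, InnerProductSpace.toDual_apply_apply, real_inner_comm, key _ (hmem t ht), neg_zero]
    rw [h0] at hcomp
    exact hcomp.hasDerivWithinAt
  intro s hs t ht
  have hb := hI.norm_image_sub_le_of_norm_hasDerivWithin_le
    (C := 0) (f' := fun _ => (0 : ℝ)) hderiv (fun x _ => by simp) ht hs
  have h0 : |h (θc s) - h (θc t)| ≤ 0 := by simpa using hb
  have h1 := abs_nonneg (h (θc s) - h (θc t))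
  have : h (θc s) - h (θc t) = 0 := abs_eq_zero.mp (le_antisymm h0 h1)
  linarith
end

section
/- Let ℓ : ℝ → ℝ be differentiable and define L(u, v) = ℓ(u v) on ℝ². Let sign : ℝ → ℝ denote the sign function with sign(0) = 0. Let t ↦ (u(t), v(t)) be a differentiable curve on an interval I with u(t) ≠ 0 and v(t) ≠ 0 for all t ∈ I, solving the sign-gradient (Adam) flow u'(t) = −sign(∂_u L(u(t), v(t))) = −sign(ℓ'(u(t)v(t)) v(t)) and v'(t) = −sign(∂_v L(u(t), v(t))) = −sign(ℓ'(u(t)v(t)) u(t)). Then |u(t)| − |v(t)| is constant on I; i.e., (u, v) ↦ |u| − |v| is a conservation law of the Adam flow for the scalar two-layer linear model. -/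
private lemma real_sign_mul (x y : ℝ) : Real.sign (x * y) = Real.sign x * Real.sign y := by
  rcases lt_trichotomy x 0 with hx | hx | hx
  · rcases lt_trichotomy y 0 with hy | hy | hy
    · rw [Real.sign_of_pos (mul_pos_of_neg_of_neg hx hy), Real.sign_of_neg hx,
        Real.sign_of_neg hy]; ring
    · simp [hy]
    · rw [Real.sign_of_neg (mul_neg_of_neg_of_pos hx hy), Real.sign_of_neg hx,
        Real.sign_of_pos hy]; ring
  · simp [hx]
  · rcases lt_trichotomy y 0 with hy | hy | hy
    · rw [Real.sign_of_neg (mul_neg_of_pos_of_neg hx hy), Real.sign_of_pos hx,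
        Real.sign_of_neg hy]; ring
    · simp [hy]
    · rw [Real.sign_of_pos (mul_pos hx hy), Real.sign_of_pos hx, Real.sign_of_pos hy]; ring

private lemma signType_cast_eq (x : ℝ) : ((SignType.sign x : SignType) : ℝ) = Real.sign x := by
  rcases lt_trichotomy x 0 with hx | hx | hx
  · simp [sign_neg hx, Real.sign_of_neg hx]
  · simp [hx]
  · simp [sign_pos hx, Real.sign_of_pos hx]

/-- `(u, v) ↦ |u| − |v|` is a conservation law of the sign-gradient (Adam) flow for the
scalar two-layer linear model `L(u, v) = ℓ(u v)`: along any differentiable solution of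
`u' = −sign(ℓ'(uv) v)`, `v' = −sign(ℓ'(uv) u)` with `u, v` never vanishing,
`|u(t)| − |v(t)|` is constant. Here `sign(0) = 0`. -/
theorem adam_flow_scalar_conservation
    (ℓ : ℝ → ℝ) (hℓ : Differentiable ℝ ℓ)
    (I : Set ℝ) (hI : Convex ℝ I)
    (u v : ℝ → ℝ)
    (hu0 : ∀ t ∈ I, u t ≠ 0) (hv0 : ∀ t ∈ I, v t ≠ 0)
    (hu : ∀ t ∈ I, HasDerivAt u (-Real.sign (deriv ℓ (u t * v t) * v t)) t)
    (hv : ∀ t ∈ I, HasDerivAt v (-Real.sign (deriv ℓ (u t * v t) * u t)) t) :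
    ∀ s ∈ I, ∀ t ∈ I, |u s| - |v s| = |u t| - |v t| := by
  intro s hs t ht
  have key : ∀ x ∈ I, HasDerivWithinAt (fun t => |u t| - |v t|) 0 I x := by
    intro x hx
    have hau : HasDerivAt (fun t => |u t|)
        ((SignType.sign (u x) : ℝ) * (-Real.sign (deriv ℓ (u x * v x) * v x))) x :=
      (hasDerivAt_abs (hu0 x hx)).comp x (hu x hx)
    have hav : HasDerivAt (fun t => |v t|)
        ((SignType.sign (v x) : ℝ) * (-Real.sign (deriv ℓ (u x * v x) * u x))) x :=
      (hasDerivAt_abs (hv0 x hx)).comp x (hv x hx)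
    have heq : (SignType.sign (u x) : ℝ) * (-Real.sign (deriv ℓ (u x * v x) * v x))
        - (SignType.sign (v x) : ℝ) * (-Real.sign (deriv ℓ (u x * v x) * u x)) = 0 := by
      rw [signType_cast_eq, signType_cast_eq, real_sign_mul, real_sign_mul]; ring
    have := (hau.sub hav)
    rw [heq] at this
    exact this.hasDerivWithinAt
  have := hI.norm_image_sub_le_of_norm_hasDerivWithin_le (C := 0) (f' := fun _ => (0 : ℝ))
    key (fun x _ => by simp) ht hs
  simpa [sub_eq_zero, eq_comm] using this
end

section
/- Let n, m, r ≥ 1 and let ℓ̂ : ℝ^{n×m} → ℝ be differentiable. Define L on ℝ^{n×r} × ℝ^{m×r} by L(U, V) = ℓ̂(U Vᵀ) (the empirical loss of a two-layer linear network, which depends on the parameters only through the product U Vᵀ). Then along any gradient-flow trajectory (U(t), V(t)) of L, the matrix U(t)ᵀ U(t) − V(t)ᵀ V(t) ∈ ℝ^{r×r} is constant in t; equivalently, all the balancedness quantities ⟨u_k, u_l⟩ − ⟨v_k, v_l⟩, 1 ≤ k, l ≤ r, where u_k and v_k denote the columns of U and V, are conserved. -/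
open scoped Matrix

/-- The matrix `U ∈ ℝ^{n×r}` extracted from the parameter vector of a two-layer linear
network (parameters modeled with a sum index so that `ℝ^{n×r} × ℝ^{m×r}` carries the
Euclidean/Frobenius inner product). -/
noncomputable def Umat (n m r : ℕ)
    (θ : EuclideanSpace ℝ ((Fin n × Fin r) ⊕ (Fin m × Fin r))) :
    Matrix (Fin n) (Fin r) ℝ :=
  Matrix.of fun a k => θ (Sum.inl (a, k))

/-- The matrix `V ∈ ℝ^{m×r}` extracted from the parameter vector. -/
noncomputable def Vmat (n m r : ℕ)
    (θ : EuclideanSpace ℝ ((Fin n × Fin r) ⊕ (Fin m × Fin r))) :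
    Matrix (Fin m) (Fin r) ℝ :=
  Matrix.of fun b k => θ (Sum.inr (b, k))

noncomputable section BalAux

abbrev Eparam (n m r : ℕ) := EuclideanSpace ℝ ((Fin n × Fin r) ⊕ (Fin m × Fin r))

def Fmap (n m r : ℕ) (x : Eparam n m r) : EuclideanSpace ℝ (Fin n × Fin m) :=
  (EuclideanSpace.equiv (Fin n × Fin m) ℝ).symm
    fun p => ∑ k : Fin r, x (Sum.inl (p.1, k)) * x (Sum.inr (p.2, k))

def Dmap (n m r : ℕ) (x : Eparam n m r) :
    Eparam n m r →L[ℝ] EuclideanSpace ℝ (Fin n × Fin m) :=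
  (((EuclideanSpace.equiv (Fin n × Fin m) ℝ).symm :
      ((Fin n × Fin m) → ℝ) ≃L[ℝ] EuclideanSpace ℝ (Fin n × Fin m)) :
      ((Fin n × Fin m) → ℝ) →L[ℝ] EuclideanSpace ℝ (Fin n × Fin m)).comp
  (ContinuousLinearMap.pi fun p => ∑ k : Fin r,
    (x (Sum.inl (p.1, k)) • (EuclideanSpace.proj (Sum.inr (p.2, k)) : Eparam n m r →L[ℝ] ℝ)
      + x (Sum.inr (p.2, k)) • (EuclideanSpace.proj (Sum.inl (p.1, k)) : Eparam n m r →L[ℝ] ℝ)))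

lemma hasFDerivAt_Fmap (n m r : ℕ) (x : Eparam n m r) :
    HasFDerivAt (Fmap n m r) (Dmap n m r x) x := by
  have h1 : HasFDerivAt
      (fun y : Eparam n m r => (fun p : Fin n × Fin m =>
        ∑ k : Fin r, y (Sum.inl (p.1, k)) * y (Sum.inr (p.2, k))))
      (ContinuousLinearMap.pi fun p => ∑ k : Fin r,
        (x (Sum.inl (p.1, k)) • (EuclideanSpace.proj (Sum.inr (p.2, k)) : Eparam n m r →L[ℝ] ℝ)
          + x (Sum.inr (p.2, k)) • (EuclideanSpace.proj (Sum.inl (p.1, k)) : Eparam n m r →L[ℝ] ℝ))) x := by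
    apply hasFDerivAt_pi.2
    intro p
    apply HasFDerivAt.fun_sum
    intro k _
    have hl : HasFDerivAt (fun y : Eparam n m r => y (Sum.inl (p.1, k)))
        (EuclideanSpace.proj (Sum.inl (p.1, k)) : Eparam n m r →L[ℝ] ℝ) x :=
      (EuclideanSpace.proj (Sum.inl (p.1, k)) : Eparam n m r →L[ℝ] ℝ).hasFDerivAt
    have hr : HasFDerivAt (fun y : Eparam n m r => y (Sum.inr (p.2, k)))
        (EuclideanSpace.proj (Sum.inr (p.2, k)) : Eparam n m r →L[ℝ] ℝ) x :=
      (EuclideanSpace.proj (Sum.inr (p.2, k)) : Eparam n m r →L[ℝ] ℝ).hasFDerivAt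
    exact hl.mul hr
  exact (((EuclideanSpace.equiv (Fin n × Fin m) ℝ).symm :
      ((Fin n × Fin m) → ℝ) →L[ℝ] EuclideanSpace ℝ (Fin n × Fin m)).hasFDerivAt).comp x h1


lemma fderiv_inner_expand {κ : Type*} [Fintype κ] (f : EuclideanSpace ℝ κ → ℝ)
    (y : EuclideanSpace ℝ κ) (w : EuclideanSpace ℝ κ) :
    fderiv ℝ f y w = ∑ p, gradient f y p * w p := by
  have h : fderiv ℝ f y w = inner (𝕜 := ℝ) (gradient f y) w := by
    rw [gradient, ← InnerProductSpace.toDual_apply_apply, LinearIsometryEquiv.apply_symm_apply]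
  rw [h, PiLp.inner_apply]
  simp [RCLike.inner_apply, mul_comm]

lemma gradient_coord {κ : Type*} [Fintype κ] [DecidableEq κ] (f : EuclideanSpace ℝ κ → ℝ)
    (y : EuclideanSpace ℝ κ) (Φ : EuclideanSpace ℝ κ →L[ℝ] ℝ) (hΦ : HasFDerivAt f Φ y)
    (i : κ) : gradient f y i = Φ (EuclideanSpace.single i 1) := by
  have h1 : gradient f y i = inner (𝕜 := ℝ) (gradient f y) (EuclideanSpace.single i (1:ℝ)) := by
    rw [EuclideanSpace.inner_single_right]; simp
  rw [h1, gradient, ← InnerProductSpace.toDual_apply_apply, LinearIsometryEquiv.apply_symm_apply,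
    hΦ.fderiv]

lemma hasFDerivAt_L_s18 (n m r : ℕ)
    (lhat : EuclideanSpace ℝ (Fin n × Fin m) → ℝ) (hlhat : Differentiable ℝ lhat)
    (L : Eparam n m r → ℝ) (hL' : ∀ x, L x = lhat (Fmap n m r x)) (x : Eparam n m r) :
    HasFDerivAt L ((fderiv ℝ lhat (Fmap n m r x)).comp (Dmap n m r x)) x := by
  have hLeq : L = fun y => lhat (Fmap n m r y) := funext hL'
  rw [hLeq]
  exact (hlhat (Fmap n m r x)).hasFDerivAt.comp x (hasFDerivAt_Fmap n m r x)

lemma grad_L_inl (n m r : ℕ)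
    (lhat : EuclideanSpace ℝ (Fin n × Fin m) → ℝ) (hlhat : Differentiable ℝ lhat)
    (L : Eparam n m r → ℝ) (hL' : ∀ x, L x = lhat (Fmap n m r x)) (x : Eparam n m r)
    (a : Fin n) (k : Fin r) :
    gradient L x (Sum.inl (a, k)) =
      ∑ b : Fin m, gradient lhat (Fmap n m r x) (a, b) * x (Sum.inr (b, k)) := by
  rw [gradient_coord L x _ (hasFDerivAt_L_s18 n m r lhat hlhat L hL' x)]
  rw [ContinuousLinearMap.comp_apply, fderiv_inner_expand]
  rw [Fintype.sum_prod_type]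
  have hsymm : ∀ (f : Fin n × Fin m → ℝ) (p : Fin n × Fin m),
      ((EuclideanSpace.equiv (Fin n × Fin m) ℝ).symm f) p = f p := fun _ _ => rfl
  simp only [Dmap, ContinuousLinearMap.comp_apply, ContinuousLinearEquiv.coe_coe, hsymm,
    ContinuousLinearMap.pi_apply, ContinuousLinearMap.sum_apply, ContinuousLinearMap.add_apply,
    ContinuousLinearMap.smul_apply, PiLp.proj_apply, EuclideanSpace.single_apply,
    Sum.inl.injEq, Sum.inr.injEq, Prod.mk.injEq, reduceCtorEq, if_false, mul_zero, add_zero,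
    zero_add, ite_and, mul_ite, mul_one, Finset.sum_ite_eq, Finset.sum_ite_eq',
    Finset.mem_univ, if_true, smul_eq_mul]
  have h2 : ∀ (x1 : Fin n) (x2 : Fin m),
      (∑ x3 : Fin r, if x1 = a then if x3 = k then x (Sum.inr (x2, x3)) else 0 else 0)
        = if x1 = a then x (Sum.inr (x2, k)) else 0 := by
    intro x1 x2; split <;> simp
  simp [h2, mul_ite, mul_zero, Finset.sum_ite_irrel, Finset.sum_ite_eq', Finset.sum_ite_eq]


lemma grad_L_inr (n m r : ℕ)
    (lhat : EuclideanSpace ℝ (Fin n × Fin m) → ℝ) (hlhat : Differentiable ℝ lhat)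
    (L : Eparam n m r → ℝ) (hL' : ∀ x, L x = lhat (Fmap n m r x)) (x : Eparam n m r)
    (b : Fin m) (k : Fin r) :
    gradient L x (Sum.inr (b, k)) =
      ∑ a : Fin n, gradient lhat (Fmap n m r x) (a, b) * x (Sum.inl (a, k)) := by
  rw [gradient_coord L x _ (hasFDerivAt_L_s18 n m r lhat hlhat L hL' x)]
  rw [ContinuousLinearMap.comp_apply, fderiv_inner_expand]
  rw [Fintype.sum_prod_type]
  have hsymm : ∀ (f : Fin n × Fin m → ℝ) (p : Fin n × Fin m),
      ((EuclideanSpace.equiv (Fin n × Fin m) ℝ).symm f) p = f p := fun _ _ => rfl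
  simp only [Dmap, ContinuousLinearMap.comp_apply, ContinuousLinearEquiv.coe_coe, hsymm,
    ContinuousLinearMap.pi_apply, ContinuousLinearMap.sum_apply, ContinuousLinearMap.add_apply,
    ContinuousLinearMap.smul_apply, PiLp.proj_apply, EuclideanSpace.single_apply,
    Sum.inl.injEq, Sum.inr.injEq, Prod.mk.injEq, reduceCtorEq, if_false, mul_zero, add_zero,
    zero_add, ite_and, mul_ite, mul_one, Finset.sum_ite_eq, Finset.sum_ite_eq',
    Finset.mem_univ, if_true, smul_eq_mul]
  have h2 : ∀ (x1 : Fin n) (x2 : Fin m),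
      (∑ x3 : Fin r, if x2 = b then if x3 = k then x (Sum.inl (x1, x3)) else 0 else 0)
        = if x2 = b then x (Sum.inl (x1, k)) else 0 := by
    intro x1 x2; split <;> simp
  simp [h2, mul_ite, mul_zero, Finset.sum_ite_irrel, Finset.sum_ite_eq', Finset.sum_ite_eq]


lemma balance_cancel (n m r : ℕ)
    (lhat : EuclideanSpace ℝ (Fin n × Fin m) → ℝ) (hlhat : Differentiable ℝ lhat)
    (L : Eparam n m r → ℝ) (hL' : ∀ x, L x = lhat (Fmap n m r x)) (x : Eparam n m r)
    (k l : Fin r) :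
    (∑ a : Fin n, ((-(gradient L x)) (Sum.inl (a, k)) * x (Sum.inl (a, l))
        + x (Sum.inl (a, k)) * (-(gradient L x)) (Sum.inl (a, l))))
      - (∑ b : Fin m, ((-(gradient L x)) (Sum.inr (b, k)) * x (Sum.inr (b, l))
        + x (Sum.inr (b, k)) * (-(gradient L x)) (Sum.inr (b, l)))) = 0 := by
  have hgl := grad_L_inl n m r lhat hlhat L hL' x
  have hgr := grad_L_inr n m r lhat hlhat L hL' x
  simp only [PiLp.neg_apply, hgl, hgr, neg_mul, mul_neg, Finset.sum_mul, Finset.mul_sum,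
    ← Finset.sum_add_distrib, sub_eq_zero, ← neg_add, neg_inj, Finset.sum_neg_distrib]
  rw [Finset.sum_comm]
  apply Finset.sum_congr rfl
  intro a _
  apply Finset.sum_congr rfl
  intro b _
  ring

end BalAux

/-- Balancedness conservation for two-layer linear networks: if
`L(U, V) = ℓ̂(U Vᵀ)` with `ℓ̂` differentiable, then `UᵀU − VᵀV` (equivalently all the
quantities `⟨u_k, u_l⟩ − ⟨v_k, v_l⟩` for columns `u_k`, `v_k`) is constant along any
gradient-flow trajectory `θ'(t) = −∇L(θ(t))`. -/
theorem linear_network_balancedness_conserved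
    (n m r : ℕ) (hn : 1 ≤ n) (hm : 1 ≤ m) (hr : 1 ≤ r)
    (lhat : EuclideanSpace ℝ (Fin n × Fin m) → ℝ) (hlhat : Differentiable ℝ lhat)
    (L : EuclideanSpace ℝ ((Fin n × Fin r) ⊕ (Fin m × Fin r)) → ℝ)
    (hL : ∀ θ, L θ = lhat ((EuclideanSpace.equiv (Fin n × Fin m) ℝ).symm fun p =>
      (Umat n m r θ * (Vmat n m r θ)ᵀ) p.1 p.2))
    (I : Set ℝ) (hI : Convex ℝ I)
    (θ : ℝ → EuclideanSpace ℝ ((Fin n × Fin r) ⊕ (Fin m × Fin r)))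
    (hflow : ∀ t ∈ I, HasDerivAt θ (-(gradient L (θ t))) t) :
    ∀ s ∈ I, ∀ t ∈ I,
      (Umat n m r (θ s))ᵀ * Umat n m r (θ s) - (Vmat n m r (θ s))ᵀ * Vmat n m r (θ s) =
      (Umat n m r (θ t))ᵀ * Umat n m r (θ t) - (Vmat n m r (θ t))ᵀ * Vmat n m r (θ t) := by
  classical
  have hL' : ∀ x, L x = lhat (Fmap n m r x) := by
    intro x
    rw [hL]
    have hfun : (fun p : Fin n × Fin m => (Umat n m r x * (Vmat n m r x)ᵀ) p.1 p.2)
        = fun p => ∑ k : Fin r, x (Sum.inl (p.1, k)) * x (Sum.inr (p.2, k)) := by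
      funext p
      simp [Matrix.mul_apply, Umat, Vmat]
    rw [Fmap, hfun]
  intro s hs t ht
  ext k l
  set g : Fin r → Fin r → ℝ → ℝ := fun k l u =>
    (∑ a : Fin n, θ u (Sum.inl (a, k)) * θ u (Sum.inl (a, l)))
      - (∑ b : Fin m, θ u (Sum.inr (b, k)) * θ u (Sum.inr (b, l))) with hg
  have hder : ∀ u ∈ I, HasDerivAt (g k l) 0 u := by
    intro u hu
    have hcoord : ∀ i, HasDerivAt (fun w => θ w i) ((-(gradient L (θ u))) i) u := by
      intro i
      exact ((EuclideanSpace.proj i :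
        EuclideanSpace ℝ ((Fin n × Fin r) ⊕ (Fin m × Fin r)) →L[ℝ] ℝ)).hasFDerivAt.comp_hasDerivAt
        u (hflow u hu)
    have h1 : HasDerivAt (g k l)
        ((∑ a : Fin n, ((-(gradient L (θ u))) (Sum.inl (a, k)) * θ u (Sum.inl (a, l))
            + θ u (Sum.inl (a, k)) * (-(gradient L (θ u))) (Sum.inl (a, l))))
          - (∑ b : Fin m, ((-(gradient L (θ u))) (Sum.inr (b, k)) * θ u (Sum.inr (b, l))
            + θ u (Sum.inr (b, k)) * (-(gradient L (θ u))) (Sum.inr (b, l))))) u := by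
      apply HasDerivAt.sub
      · exact HasDerivAt.fun_sum fun a _ => (hcoord _).mul (hcoord _)
      · exact HasDerivAt.fun_sum fun b _ => (hcoord _).mul (hcoord _)
    have h0 := balance_cancel n m r lhat hlhat L hL' (θ u) k l
    rw [h0] at h1
    exact h1
  have hconst : g k l s = g k l t := by
    have hfw : ∀ u ∈ I, HasFDerivWithinAt (g k l) (0 : ℝ →L[ℝ] ℝ) I u := by
      intro u hu
      have h := ((hder u hu).hasFDerivAt).hasFDerivWithinAt (s := I)
      have hz : (ContinuousLinearMap.toSpanSingleton ℝ (0 : ℝ)) = 0 := by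
        ext; simp
      rwa [hz] at h
    have hb := hI.norm_image_sub_le_of_norm_hasFDerivWithin_le hfw
      (fun u _ => norm_zero.le) ht hs
    have h0 : ‖g k l s - g k l t‖ ≤ 0 := by simpa using hb
    exact sub_eq_zero.mp (norm_le_zero_iff.mp h0)
  have e1 : ∀ u, ((Umat n m r (θ u))ᵀ * Umat n m r (θ u)
      - (Vmat n m r (θ u))ᵀ * Vmat n m r (θ u)) k l = g k l u := by
    intro u
    simp [Matrix.sub_apply, Matrix.mul_apply, Matrix.transpose_apply, Umat, Vmat, hg]
  rw [e1, e1]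
  exact hconst
end
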